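/- Let n ≥ 8 and let C ⊆ 𝔽₂ⁿ be a finite set of vectors each of Hamming weight exactly 8, such that any two distinct elements of C have Hamming distance at least 8. Let V ⊆ ℝⁿ be the union of: (i) all vectors with exactly two nonzero coordinates, each equal to 2 or −2; and (ii) all vectors w such that, for some c ∈ C, w_i ∈ {1, −1} for every i in the support of c, w_i = 0 for every i outside the support of c, and the number of coordinates with w_i = −1 is odd. Then every v ∈ V has squared Euclidean norm 8, any two distinct v, w ∈ V satisfy ⟨v, w⟩ ≤ 4, and |V| = 4·(n choose 2) + 128·|C|. -/

import Mathlib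

open scoped RealInnerProductSpace

/-- The odd-signs kissing configuration in `ℝⁿ` associated to a constant-weight-8
binary code `C ⊆ 𝔽₂ⁿ`: the union of (i) all vectors with exactly two nonzero
coordinates, each equal to `2` or `-2`, and (ii) all vectors with entries `±1` on
the support of some codeword `c ∈ C` and `0` elsewhere, having an odd number of
entries equal to `-1`. -/
def oddKissingConfig (n : ℕ) (C : Finset (Fin n → ZMod 2)) :
    Set (EuclideanSpace ℝ (Fin n)) :=
  {w | (∃ i j : Fin n, i ≠ j ∧ (w i = 2 ∨ w i = -2) ∧ (w j = 2 ∨ w j = -2) ∧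
          ∀ k : Fin n, k ≠ i → k ≠ j → w k = 0) ∨
       (∃ c ∈ C, (∀ i : Fin n, c i ≠ 0 → (w i = 1 ∨ w i = -1)) ∧
          (∀ i : Fin n, c i = 0 → w i = 0) ∧
          Odd {i : Fin n | w i = -1}.ncard)}

open Finset

namespace OddKissingAux


lemma card_odd_powerset {α : Type*} [DecidableEq α] (s : Finset α) (a : α) (ha : a ∈ s) :
    #(s.powerset.filter fun t => Odd #t) = 2 ^ (#s - 1) := by
  classical
  set O := s.powerset.filter fun t => Odd #t with hO
  set E := s.powerset.filter fun t => ¬ Odd #t with hE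
  have hsum : #O + #E = 2 ^ #s := by
    rw [hO, hE, card_filter_add_card_filter_not, card_powerset]
  have hmemO : ∀ t, t ∈ O ↔ t ⊆ s ∧ Odd #t := by
    intro t; simp [hO, mem_filter, mem_powerset]
  have hmemE : ∀ t, t ∈ E ↔ t ⊆ s ∧ ¬ Odd #t := by
    intro t; simp [hE, mem_filter, mem_powerset]
  have hbij : #O = #E := by
    refine card_bij' (fun t _ => if a ∈ t then t.erase a else insert a t)
      (fun t _ => if a ∈ t then t.erase a else insert a t) ?_ ?_ ?_ ?_
    · intro t ht
      obtain ⟨hts, hodd⟩ := (hmemO t).1 ht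
      obtain ⟨k, hk⟩ := hodd
      by_cases h : a ∈ t
      · rw [if_pos h, hmemE]
        refine ⟨(erase_subset a t).trans hts, ?_⟩
        rw [card_erase_of_mem h, Nat.not_odd_iff_even]
        refine ⟨k, ?_⟩; omega
      · rw [if_neg h, hmemE]
        refine ⟨insert_subset ha hts, ?_⟩
        rw [card_insert_of_notMem h, Nat.not_odd_iff_even]
        refine ⟨k + 1, ?_⟩; omega
    · intro t ht
      obtain ⟨hts, heven⟩ := (hmemE t).1 ht
      rw [Nat.not_odd_iff_even] at heven
      obtain ⟨k, hk⟩ := heven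
      by_cases h : a ∈ t
      · rw [if_pos h, hmemO]
        refine ⟨(erase_subset a t).trans hts, ?_⟩
        have h1 : 1 ≤ #t := card_pos.2 ⟨a, h⟩
        rw [card_erase_of_mem h]
        refine ⟨k - 1, ?_⟩; omega
      · rw [if_neg h, hmemO]
        refine ⟨insert_subset ha hts, ?_⟩
        rw [card_insert_of_notMem h]
        refine ⟨k, ?_⟩; omega
    · intro t ht
      by_cases h : a ∈ t
      · rw [if_pos h]
        rw [if_neg (notMem_erase a t), insert_erase h]
      · rw [if_neg h, if_pos (mem_insert_self a t), erase_insert h]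
    · intro t ht
      by_cases h : a ∈ t
      · rw [if_pos h]
        rw [if_neg (notMem_erase a t), insert_erase h]
      · rw [if_neg h, if_pos (mem_insert_self a t), erase_insert h]
  have hpos : 1 ≤ #s := card_pos.2 ⟨a, ha⟩
  have h2 : 2 ^ #s = 2 * 2 ^ (#s - 1) := by
    rw [← pow_succ']
    congr 1
    omega
  omega

lemma card_ltpairs (n : ℕ) :
    #((Finset.univ ×ˢ Finset.univ : Finset (Fin n × Fin n)).filter fun p => p.1 < p.2)
      = n.choose 2 := by
  have key : #((Finset.univ ×ˢ Finset.univ : Finset (Fin n × Fin n)).filter fun p => p.1 < p.2)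
      = #((Finset.univ : Finset (Fin n)).powersetCard 2) := by
    apply card_bij (fun p _ => ({p.1, p.2} : Finset (Fin n)))
    · intro p hp
      simp only [mem_filter] at hp
      simp [mem_powersetCard, card_pair (ne_of_lt hp.2)]
    · intro p hp q hq h
      simp only [mem_filter] at hp hq
      have h1 : p.1 ∈ ({q.1, q.2} : Finset (Fin n)) := by rw [← h]; simp
      have h2 : p.2 ∈ ({q.1, q.2} : Finset (Fin n)) := by rw [← h]; simp
      simp only [mem_insert, mem_singleton] at h1 h2
      have hp2 := hp.2; have hq2 := hq.2
      have : p.1 = q.1 ∧ p.2 = q.2 := by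
        rcases h1 with h1 | h1 <;> rcases h2 with h2 | h2 <;>
          (first
            | exact ⟨h1, h2⟩
            | (exfalso; subst h1; subst h2; simp_all; omega)
            | (constructor <;> omega))
      exact Prod.ext this.1 this.2
    · intro t ht
      simp only [mem_powersetCard] at ht
      obtain ⟨x, y, hxy, rfl⟩ := card_eq_two.1 ht.2
      rcases lt_or_gt_of_ne hxy with h | h
      · exact ⟨(x, y), by simp [h], rfl⟩
      · exact ⟨(y, x), by simp [h], by rw [pair_comm]⟩
  rw [key, card_powersetCard, card_univ, Fintype.card_fin]

variable {n : ℕ}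

/-- type (i) vector -/
def vecA (i j : Fin n) (b b' : Bool) : EuclideanSpace ℝ (Fin n) :=
  WithLp.toLp 2 fun k => if k = i then (if b then 2 else -2) else if k = j then (if b' then 2 else -2) else 0

/-- type (ii) vector -/
def vecB (c : Fin n → ZMod 2) (T : Finset (Fin n)) : EuclideanSpace ℝ (Fin n) :=
  WithLp.toLp 2 fun i => if c i = 0 then 0 else if i ∈ T then -1 else 1

def supp (c : Fin n → ZMod 2) : Finset (Fin n) := Finset.univ.filter fun i => c i ≠ 0

lemma mem_supp {c : Fin n → ZMod 2} {i : Fin n} : i ∈ supp c ↔ c i ≠ 0 := by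
  simp [supp]

lemma card_supp (c : Fin n → ZMod 2) : #(supp c) = hammingNorm c := by
  rw [hammingNorm, supp]

lemma zmod2_cases (a : ZMod 2) : a = 0 ∨ a = 1 := by revert a; decide

lemma eq_of_supp_eq {c c' : Fin n → ZMod 2} (h : supp c = supp c') : c = c' := by
  funext i
  have h1 := mem_supp (c := c) (i := i)
  have h2 := mem_supp (c := c') (i := i)
  rw [h] at h1
  rcases zmod2_cases (c i) with hc | hc <;> rcases zmod2_cases (c' i) with hc' | hc' <;>
    simp_all

lemma inner_eq_sum (v w : EuclideanSpace ℝ (Fin n)) : ⟪v, w⟫ = ∑ i, v i * w i := by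
  simp [PiLp.inner_apply, RCLike.inner_apply, mul_comm]

lemma eq_vecA (v : EuclideanSpace ℝ (Fin n)) (i j : Fin n) (hij : i ≠ j)
    (hvi : v i = 2 ∨ v i = -2) (hvj : v j = 2 ∨ v j = -2)
    (hz : ∀ k, k ≠ i → k ≠ j → v k = 0) :
    ∃ b b' : Bool, v = vecA i j b b' := by
  have key : ∀ b b' : Bool, v i = (if b then 2 else -2) → v j = (if b' then 2 else -2) →
      v = vecA i j b b' := by
    intro b b' hb hb'
    ext k
    by_cases hk : k = i
    · subst hk; simpa [vecA] using hb
    · by_cases hk' : k = j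
      · subst hk'; simpa [vecA, hk] using hb'
      · simp [vecA, hk, hk', hz k hk hk']
  rcases hvi with h | h <;> rcases hvj with g | g
  · exact ⟨true, true, key true true (by simpa using h) (by simpa using g)⟩
  · exact ⟨true, false, key true false (by simpa using h) (by simpa using g)⟩
  · exact ⟨false, true, key false true (by simpa using h) (by simpa using g)⟩
  · exact ⟨false, false, key false false (by simpa using h) (by simpa using g)⟩

lemma eq_vecB (v : EuclideanSpace ℝ (Fin n)) (c : Fin n → ZMod 2)
    (h1 : ∀ i, c i ≠ 0 → (v i = 1 ∨ v i = -1)) (h0 : ∀ i, c i = 0 → v i = 0) :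
    ∃ T : Finset (Fin n), T ⊆ supp c ∧ ({i : Fin n | v i = -1} : Set (Fin n)) = ↑T ∧
      v = vecB c T := by
  classical
  refine ⟨Finset.univ.filter fun i => v i = -1, ?_, ?_, ?_⟩
  · intro i hi
    simp only [mem_filter, mem_univ, true_and] at hi
    rw [mem_supp]
    intro hc
    rw [h0 i hc] at hi
    norm_num at hi
  · ext i; simp
  · ext i
    by_cases hc : c i = 0
    · simp [vecB, hc, h0 i hc]
    · rcases h1 i hc with hv | hv <;> simp [vecB, hc, hv] <;> norm_num

lemma vecA_mem_iff (i j : Fin n) (hij : i ≠ j) (b b' : Bool) :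
    ((vecA i j b b' i = 2 ∨ vecA i j b b' i = -2) ∧
     (vecA i j b b' j = 2 ∨ vecA i j b b' j = -2) ∧
     ∀ k, k ≠ i → k ≠ j → vecA i j b b' k = 0) := by
  refine ⟨?_, ?_, ?_⟩
  · cases b <;> simp [vecA]
  · cases b' <;> simp [vecA, Ne.symm hij]
  · intro k hk hk'; simp [vecA, hk, hk']

lemma vecA_inj {i j i' j' : Fin n} {b b' d d' : Bool} (hij : i < j) (hij' : i' < j')
    (h : vecA i j b b' = vecA i' j' d d') : i = i' ∧ j = j' ∧ b = d ∧ b' = d' := by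
  have hval : ∀ k, vecA i j b b' k = vecA i' j' d d' k := fun k => by rw [h]
  have hne : ∀ (x y : Fin n) (e e' : Bool), x < y → vecA x y e e' x ≠ 0 ∧ vecA x y e e' y ≠ 0 := by
    intro x y e e' hxy
    constructor
    · cases e <;> simp [vecA]
    · cases e <;> cases e' <;> simp [vecA, (ne_of_lt hxy).symm]
  have hzero : ∀ (x y : Fin n) (e e' : Bool) (k : Fin n), k ≠ x → k ≠ y →
      vecA x y e e' k = 0 := by
    intro x y e e' k hk hk'; simp [vecA, hk, hk']
  have key : ∀ k : Fin n, vecA i j b b' k ≠ 0 → (k = i' ∨ k = j') := by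
    intro k hk
    by_contra hcon
    push_neg at hcon
    rw [hval k, hzero i' j' d d' k hcon.1 hcon.2] at hk
    exact hk rfl
  have key' : ∀ k : Fin n, vecA i' j' d d' k ≠ 0 → (k = i ∨ k = j) := by
    intro k hk
    by_contra hcon
    push_neg at hcon
    rw [← hval k, hzero i j b b' k hcon.1 hcon.2] at hk
    exact hk rfl
  have e1 := key i (hne i j b b' hij).1
  have e2 := key j (hne i j b b' hij).2
  have e3 := key' i' (hne i' j' d d' hij').1
  have e4 := key' j' (hne i' j' d d' hij').2
  have hii' : i = i' ∧ j = j' := by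
    have v1 : i.val = i'.val ∨ i.val = j'.val := by
      rcases e1 with h | h <;> [left; right] <;> exact congrArg Fin.val h
    have v2 : j.val = i'.val ∨ j.val = j'.val := by
      rcases e2 with h | h <;> [left; right] <;> exact congrArg Fin.val h
    have v3 : i'.val = i.val ∨ i'.val = j.val := by
      rcases e3 with h | h <;> [left; right] <;> exact congrArg Fin.val h
    have v4 : j'.val = i.val ∨ j'.val = j.val := by
      rcases e4 with h | h <;> [left; right] <;> exact congrArg Fin.val h
    have l1 : i.val < j.val := hij
    have l2 : i'.val < j'.val := hij'
    exact ⟨Fin.ext (by omega), Fin.ext (by omega)⟩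
  obtain ⟨hi, hj⟩ := hii'
  subst hi; subst hj
  refine ⟨rfl, rfl, ?_, ?_⟩
  · have := hval i
    cases b <;> cases d <;> simp [vecA] at this ⊢ <;> norm_num at this
  · have := hval j
    cases b <;> cases b' <;> cases d' <;>
      simp [vecA, (ne_of_lt hij).symm] at this ⊢ <;> norm_num at this

lemma vecB_supp (c : Fin n → ZMod 2) (T : Finset (Fin n)) (i : Fin n) :
    vecB c T i ≠ 0 ↔ c i ≠ 0 := by
  by_cases hc : c i = 0
  · simp [vecB, hc]
  · by_cases hT : i ∈ T <;> simp [vecB, hc, hT]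

lemma vecB_neg_one_iff (c : Fin n → ZMod 2) (T : Finset (Fin n)) (hT : T ⊆ supp c) (i : Fin n) :
    vecB c T i = -1 ↔ i ∈ T := by
  by_cases hc : c i = 0
  · have : i ∉ T := fun hi => (mem_supp.1 (hT hi)) hc
    simp [vecB, hc, this]
  · by_cases hi : i ∈ T <;> simp [vecB, hc, hi] <;> norm_num

lemma vecB_inj {c c' : Fin n → ZMod 2} {T T' : Finset (Fin n)}
    (hT : T ⊆ supp c) (hT' : T' ⊆ supp c') (h : vecB c T = vecB c' T') : c = c' ∧ T = T' := by
  have hval : ∀ k, vecB c T k = vecB c' T' k := fun k => by rw [h]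
  have hcc : c = c' := by
    apply eq_of_supp_eq
    ext i
    rw [mem_supp, mem_supp, ← vecB_supp c T, ← vecB_supp c' T', hval i]
  subst hcc
  refine ⟨rfl, ?_⟩
  ext i
  rw [← vecB_neg_one_iff c T hT i, ← vecB_neg_one_iff c T' hT' i, hval i]

end OddKissingAux

open OddKissingAux in
/-- If `n ≥ 8` and `C ⊆ 𝔽₂ⁿ` is a code of constant weight 8 and minimum distance 8,
then the associated odd-signs configuration consists of vectors of squared norm 8,
with pairwise inner products at most 4, and has `4·(n choose 2) + 128·|C|` elements. -/
theorem oddKissingConfig_norm_inner_card (n : ℕ) (hn : 8 ≤ n)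
    (C : Finset (Fin n → ZMod 2))
    (hweight : ∀ c ∈ C, hammingNorm c = 8)
    (hdist : ∀ c ∈ C, ∀ c' ∈ C, c ≠ c' → 8 ≤ hammingDist c c') :
    (∀ v ∈ oddKissingConfig n C, ‖v‖ ^ 2 = 8) ∧
    (∀ v ∈ oddKissingConfig n C, ∀ w ∈ oddKissingConfig n C, v ≠ w → ⟪v, w⟫ ≤ 4) ∧
    (oddKissingConfig n C).ncard = 4 * n.choose 2 + 128 * C.card := by
  classical
  have hsupp8 : ∀ c ∈ C, #(supp c) = 8 := fun c hc => by
    rw [card_supp]; exact hweight c hc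
  have hmem : ∀ v, v ∈ oddKissingConfig n C ↔
      ((∃ i j : Fin n, i ≠ j ∧ (v i = 2 ∨ v i = -2) ∧ (v j = 2 ∨ v j = -2) ∧
          ∀ k : Fin n, k ≠ i → k ≠ j → v k = 0) ∨
       (∃ c ∈ C, (∀ i : Fin n, c i ≠ 0 → (v i = 1 ∨ v i = -1)) ∧
          (∀ i : Fin n, c i = 0 → v i = 0) ∧
          Odd {i : Fin n | v i = -1}.ncard)) := fun v => Iff.rfl
  -- Part 1 : norms
  have hnorm : ∀ v ∈ oddKissingConfig n C, ⟪v, v⟫ = 8 := by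
    intro v hv
    rw [hmem] at hv
    rcases hv with ⟨i, j, hij, hvi, hvj, hz⟩ | ⟨c, hc, h1, h0, hodd⟩
    · rw [inner_eq_sum]
      have hsub : ∑ k, v k * v k = ∑ k ∈ ({i, j} : Finset (Fin n)), v k * v k := by
        refine (Finset.sum_subset (Finset.subset_univ _) ?_).symm
        intro k _ hk
        simp only [Finset.mem_insert, Finset.mem_singleton, not_or] at hk
        rw [hz k hk.1 hk.2]; ring
      rw [hsub, Finset.sum_pair hij]
      rcases hvi with h | h <;> rcases hvj with g | g <;> rw [h, g] <;> norm_num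
    · rw [inner_eq_sum]
      have hsub : ∑ k, v k * v k = ∑ k ∈ supp c, v k * v k := by
        refine (Finset.sum_subset (Finset.subset_univ _) ?_).symm
        intro k _ hk
        rw [mem_supp, not_not] at hk
        rw [h0 k hk]; ring
      have hone : ∀ k ∈ supp c, v k * v k = 1 := by
        intro k hk
        rcases h1 k (mem_supp.1 hk) with h | h <;> rw [h] <;> norm_num
      rw [hsub, Finset.sum_congr rfl hone, Finset.sum_const, hsupp8 c hc]
      norm_num
  have hnormsq : ∀ v ∈ oddKissingConfig n C, ‖v‖ ^ 2 = 8 := fun v hv => by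
    rw [← real_inner_self_eq_norm_sq]; exact hnorm v hv
  -- strict bound < 8
  have hlt8 : ∀ v ∈ oddKissingConfig n C, ∀ w ∈ oddKissingConfig n C, v ≠ w → ⟪v, w⟫ < 8 := by
    intro v hv w hw hne
    have h1 := hnormsq v hv
    have h2 := hnormsq w hw
    have h3 : (0:ℝ) < ‖v - w‖ ^ 2 := by
      have hne' : v - w ≠ 0 := sub_ne_zero.2 hne
      have hpos : 0 < ‖v - w‖ := norm_pos_iff.2 hne'
      positivity
    have h4 := norm_sub_sq_real v w
    linarith
  -- Part 2 : inner products
  have hinner : ∀ v ∈ oddKissingConfig n C, ∀ w ∈ oddKissingConfig n C, v ≠ w → ⟪v, w⟫ ≤ 4 := by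
    intro v hv w hw hne
    have hlt := hlt8 v hv w hw hne
    rw [hmem] at hv hw
    rcases hv with ⟨i, j, hij, hvi, hvj, hvz⟩ | ⟨c, hc, hv1, hv0, hvodd⟩ <;>
      rcases hw with ⟨i', j', hij', hwi, hwj, hwz⟩ | ⟨c', hc', hw1, hw0, hwodd⟩
    · -- (i)-(i)
      have hv3 : ∀ k, v k = 0 ∨ v k = 2 ∨ v k = -2 := by
        intro k
        by_cases hk : k = i
        · subst hk; tauto
        · by_cases hk' : k = j
          · subst hk'; tauto
          · exact Or.inl (hvz k hk hk')
      have hw3 : ∀ k, w k = 0 ∨ w k = 2 ∨ w k = -2 := by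
        intro k
        by_cases hk : k = i'
        · subst hk; tauto
        · by_cases hk' : k = j'
          · subst hk'; tauto
          · exact Or.inl (hwz k hk hk')
      have hex : ∀ k, ∃ m : ℤ, v k * w k = 4 * m := by
        intro k
        rcases hv3 k with h | h | h <;> rcases hw3 k with g | g | g
        · exact ⟨0, by rw [h, g]; push_cast; norm_num⟩
        · exact ⟨0, by rw [h, g]; push_cast; norm_num⟩
        · exact ⟨0, by rw [h, g]; push_cast; norm_num⟩
        · exact ⟨0, by rw [h, g]; push_cast; norm_num⟩
        · exact ⟨1, by rw [h, g]; push_cast; norm_num⟩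
        · exact ⟨-1, by rw [h, g]; push_cast; norm_num⟩
        · exact ⟨0, by rw [h, g]; push_cast; norm_num⟩
        · exact ⟨-1, by rw [h, g]; push_cast; norm_num⟩
        · exact ⟨1, by rw [h, g]; push_cast; norm_num⟩
      choose m hm using hex
      have hsum : ⟪v, w⟫ = ((4 * ∑ k, m k : ℤ) : ℝ) := by
        rw [inner_eq_sum]
        push_cast
        rw [Finset.mul_sum]
        exact Finset.sum_congr rfl fun k _ => hm k
      rw [hsum] at hlt ⊢
      have h8 : (4 * ∑ k, m k : ℤ) < 8 := by exact_mod_cast hlt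
      have h4 : (4 * ∑ k, m k : ℤ) ≤ 4 := by omega
      exact_mod_cast h4
    · -- (i)-(ii)
      have hw3 : ∀ k, w k = 0 ∨ w k = 1 ∨ w k = -1 := by
        intro k
        by_cases hk : c' k = 0
        · exact Or.inl (hw0 k hk)
        · rcases hw1 k hk with h | h <;> tauto
      have hsub : ⟪v, w⟫ = v i * w i + v j * w j := by
        rw [inner_eq_sum]
        have hss : ∑ k, v k * w k = ∑ k ∈ ({i, j} : Finset (Fin n)), v k * w k := by
          refine (Finset.sum_subset (Finset.subset_univ _) ?_).symm
          intro k _ hk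
          simp only [Finset.mem_insert, Finset.mem_singleton, not_or] at hk
          rw [hvz k hk.1 hk.2]; ring
        rw [hss, Finset.sum_pair hij]
      rw [hsub]
      have b1 : v i * w i ≤ 2 := by
        rcases hvi with h | h <;> rcases hw3 i with g | g | g <;> rw [h, g] <;> norm_num
      have b2 : v j * w j ≤ 2 := by
        rcases hvj with h | h <;> rcases hw3 j with g | g | g <;> rw [h, g] <;> norm_num
      linarith
    · -- (ii)-(i)
      have hv3 : ∀ k, v k = 0 ∨ v k = 1 ∨ v k = -1 := by
        intro k
        by_cases hk : c k = 0
        · exact Or.inl (hv0 k hk)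
        · rcases hv1 k hk with h | h <;> tauto
      have hsub : ⟪v, w⟫ = v i' * w i' + v j' * w j' := by
        rw [inner_eq_sum]
        have hss : ∑ k, v k * w k = ∑ k ∈ ({i', j'} : Finset (Fin n)), v k * w k := by
          refine (Finset.sum_subset (Finset.subset_univ _) ?_).symm
          intro k _ hk
          simp only [Finset.mem_insert, Finset.mem_singleton, not_or] at hk
          rw [hwz k hk.1 hk.2]; ring
        rw [hss, Finset.sum_pair hij']
      rw [hsub]
      have b1 : v i' * w i' ≤ 2 := by
        rcases hwi with h | h <;> rcases hv3 i' with g | g | g <;> rw [h, g] <;> norm_num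
      have b2 : v j' * w j' ≤ 2 := by
        rcases hwj with h | h <;> rcases hv3 j' with g | g | g <;> rw [h, g] <;> norm_num
      linarith
    · -- (ii)-(ii)
      by_cases hcc : c = c'
      · subst hcc
        set s := supp c with hs
        set Tv := Finset.univ.filter (fun k => v k = -1) with hTv
        set Tw := Finset.univ.filter (fun k => w k = -1) with hTw
        have hTvs : Tv ⊆ s := by
          intro k hk
          simp only [hTv, Finset.mem_filter, Finset.mem_univ, true_and] at hk
          rw [hs, mem_supp]
          intro h0k
          rw [hv0 k h0k] at hk; norm_num at hk
        have hTws : Tw ⊆ s := by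
          intro k hk
          simp only [hTw, Finset.mem_filter, Finset.mem_univ, true_and] at hk
          rw [hs, mem_supp]
          intro h0k
          rw [hw0 k h0k] at hk; norm_num at hk
        have hoddv : Odd #Tv := by
          have hseteq : ({k : Fin n | v k = -1} : Set (Fin n)) = ↑Tv := by
            ext k; simp [hTv]
          rwa [hseteq, Set.ncard_coe_finset] at hvodd
        have hoddw : Odd #Tw := by
          have hseteq : ({k : Fin n | w k = -1} : Set (Fin n)) = ↑Tw := by
            ext k; simp [hTw]
          rwa [hseteq, Set.ncard_coe_finset] at hwodd
        set D := (Tv \ Tw) ∪ (Tw \ Tv) with hD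
        have hDs : D ⊆ s :=
          Finset.union_subset (Finset.sdiff_subset.trans hTvs) (Finset.sdiff_subset.trans hTws)
        have hDeven : Even #D := by
          have h1 : #(Tv \ Tw) + #(Tv ∩ Tw) = #Tv := Finset.card_sdiff_add_card_inter _ _
          have h2 : #(Tw \ Tv) + #(Tw ∩ Tv) = #Tw := Finset.card_sdiff_add_card_inter _ _
          have h3 : #D = #(Tv \ Tw) + #(Tw \ Tv) := by
            rw [hD, Finset.card_union_of_disjoint (disjoint_sdiff_sdiff)]
          have h4 : Tw ∩ Tv = Tv ∩ Tw := Finset.inter_comm _ _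
          rw [h4] at h2
          obtain ⟨a, ha⟩ := hoddv
          obtain ⟨b, hb⟩ := hoddw
          rcases Nat.even_or_odd #D with h | h
          · exact h
          · obtain ⟨k0, hk0⟩ := h
            omega
        have hDne : D.Nonempty := by
          obtain ⟨k, hk⟩ : ∃ k, v k ≠ w k := by
            by_contra hcon
            push_neg at hcon
            exact hne (PiLp.ext hcon)
          have hcK : c k ≠ 0 := by
            intro h0k
            rw [hv0 k h0k, hw0 k h0k] at hk
            exact hk rfl
          refine ⟨k, ?_⟩
          rw [hD, Finset.mem_union, Finset.mem_sdiff, Finset.mem_sdiff]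
          simp only [hTv, hTw, Finset.mem_filter, Finset.mem_univ, true_and]
          rcases hv1 k hcK with h | h <;> rcases hw1 k hcK with g | g
          · exact absurd (h.trans g.symm) hk
          · exact Or.inr ⟨g, by rw [h]; norm_num⟩
          · exact Or.inl ⟨h, by rw [g]; norm_num⟩
          · exact absurd (h.trans g.symm) hk
        have hD2 : 2 ≤ #D := by
          obtain ⟨a, ha⟩ := hDeven
          have hpos := Finset.card_pos.2 hDne
          omega
        have hterm : ∀ k ∈ s, v k * w k = if k ∈ D then (-1:ℝ) else 1 := by
          intro k hk
          have hcK : c k ≠ 0 := mem_supp.1 hk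
          have hDk : k ∈ D ↔ ((v k = -1 ∧ ¬ w k = -1) ∨ (w k = -1 ∧ ¬ v k = -1)) := by
            rw [hD, Finset.mem_union, Finset.mem_sdiff, Finset.mem_sdiff]
            simp [hTv, hTw]
          rcases hv1 k hcK with h | h <;> rcases hw1 k hcK with g | g <;>
            norm_num [hDk, h, g]
        have hsumD : ⟪v, w⟫ = ∑ k ∈ s, v k * w k := by
          rw [inner_eq_sum]
          refine (Finset.sum_subset (Finset.subset_univ _) ?_).symm
          intro k _ hk
          rw [hs, mem_supp, not_not] at hk
          rw [hv0 k hk]; ring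
        have hsplit : ∑ k ∈ s, (if k ∈ D then (-1:ℝ) else 1)
            = ∑ k ∈ s \ D, (if k ∈ D then (-1:ℝ) else 1)
              + ∑ k ∈ D, (if k ∈ D then (-1:ℝ) else 1) := (Finset.sum_sdiff hDs).symm
        have hA : ∑ k ∈ s \ D, (if k ∈ D then (-1:ℝ) else 1) = ((#s - #D : ℕ) : ℝ) := by
          rw [Finset.sum_congr rfl (fun k hk => if_neg (Finset.mem_sdiff.1 hk).2),
            Finset.sum_const, Finset.card_sdiff_of_subset hDs, nsmul_eq_mul, mul_one]
        have hB : ∑ k ∈ D, (if k ∈ D then (-1:ℝ) else 1) = -((#D : ℕ) : ℝ) := by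
          rw [Finset.sum_congr rfl (fun k hk => if_pos hk), Finset.sum_const, nsmul_eq_mul]
          ring
        have hDle : #D ≤ 8 := by
          have := Finset.card_le_card hDs
          rw [hsupp8 c hc] at this
          exact this
        rw [hsumD, Finset.sum_congr rfl hterm, hsplit, hA, hB, hsupp8 c hc]
        have hcast : ((8 - #D : ℕ) : ℝ) = 8 - (#D : ℝ) := by
          push_cast [Nat.cast_sub hDle]
          ring
        rw [hcast]
        have : (2:ℝ) ≤ (#D : ℝ) := by exact_mod_cast hD2
        linarith
      · -- different codewords
        have hdiff := hdist c hc c' hc' hcc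
        have hcard : #(supp c ∩ supp c') ≤ 4 := by
          have h8 : hammingDist c c' = #((supp c \ supp c') ∪ (supp c' \ supp c)) := by
            rw [hammingDist]
            congr 1
            ext k
            simp only [Finset.mem_filter, Finset.mem_univ, true_and, Finset.mem_union,
              Finset.mem_sdiff, mem_supp]
            rcases zmod2_cases (c k) with h | h <;> rcases zmod2_cases (c' k) with g | g <;>
              simp [h, g]
          have h1 : #(supp c \ supp c') + #(supp c ∩ supp c') = #(supp c) :=
            Finset.card_sdiff_add_card_inter _ _
          have h2 : #(supp c' \ supp c) + #(supp c' ∩ supp c) = #(supp c') :=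
            Finset.card_sdiff_add_card_inter _ _
          have h3 : #((supp c \ supp c') ∪ (supp c' \ supp c))
              = #(supp c \ supp c') + #(supp c' \ supp c) :=
            Finset.card_union_of_disjoint (disjoint_sdiff_sdiff)
          have h4 : supp c' ∩ supp c = supp c ∩ supp c' := Finset.inter_comm _ _
          rw [h4] at h2
          have h5 := hsupp8 c hc
          have h6 := hsupp8 c' hc'
          omega
        have hsum : ⟪v, w⟫ = ∑ k ∈ supp c ∩ supp c', v k * w k := by
          rw [inner_eq_sum]
          refine (Finset.sum_subset (Finset.subset_univ _) ?_).symm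
          intro k _ hk
          rw [Finset.mem_inter, not_and_or] at hk
          rcases hk with hk | hk
          · rw [mem_supp, not_not] at hk; rw [hv0 k hk]; ring
          · rw [mem_supp, not_not] at hk; rw [hw0 k hk]; ring
        rw [hsum]
        calc ∑ k ∈ supp c ∩ supp c', v k * w k ≤ ∑ k ∈ supp c ∩ supp c', 1 := by
              apply Finset.sum_le_sum
              intro k hk
              obtain ⟨hk1, hk2⟩ := Finset.mem_inter.1 hk
              rcases hv1 k (mem_supp.1 hk1) with h | h <;>
                rcases hw1 k (mem_supp.1 hk2) with g | g <;> rw [h, g] <;> norm_num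
          _ = ((#(supp c ∩ supp c') : ℕ) : ℝ) := by
              rw [Finset.sum_const, nsmul_eq_mul, mul_one]
          _ ≤ 4 := by exact_mod_cast hcard
  -- Part 3 : cardinality
  have hcard : (oddKissingConfig n C).ncard = 4 * n.choose 2 + 128 * C.card := by
    set pA : Finset ((Fin n × Fin n) × Bool × Bool) :=
      ((Finset.univ ×ˢ Finset.univ).filter fun p : Fin n × Fin n => p.1 < p.2) ×ˢ Finset.univ
      with hpA
    set fA : (Fin n × Fin n) × Bool × Bool → EuclideanSpace ℝ (Fin n) :=
      fun q => vecA q.1.1 q.1.2 q.2.1 q.2.2 with hfA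
    set pB : Finset ((Fin n → ZMod 2) × Finset (Fin n)) :=
      C.biUnion fun c => ((supp c).powerset.filter fun t => Odd #t).image fun t => (c, t)
      with hpB
    set fB : (Fin n → ZMod 2) × Finset (Fin n) → EuclideanSpace ℝ (Fin n) :=
      fun q => vecB q.1 q.2 with hfB
    have hmemA : ∀ q : (Fin n × Fin n) × Bool × Bool, q ∈ pA ↔ q.1.1 < q.1.2 := by
      intro q
      rw [hpA]
      simp [Finset.mem_product, Finset.mem_filter]
    have hmemB : ∀ q : (Fin n → ZMod 2) × Finset (Fin n),
        q ∈ pB ↔ q.1 ∈ C ∧ q.2 ⊆ supp q.1 ∧ Odd #q.2 := by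
      intro q
      rw [hpB]
      simp only [Finset.mem_biUnion, Finset.mem_image, Finset.mem_filter, Finset.mem_powerset]
      constructor
      · rintro ⟨c, hc, t, ⟨hts, hodd⟩, heq⟩
        rw [← heq]
        exact ⟨hc, hts, hodd⟩
      · rintro ⟨h1, h2, h3⟩
        exact ⟨q.1, h1, q.2, ⟨h2, h3⟩, rfl⟩
    have hseteq : oddKissingConfig n C = ↑(pA.image fA ∪ pB.image fB) := by
      ext v
      rw [hmem]
      simp only [Finset.coe_union, Set.mem_union, Finset.coe_image, Set.mem_image,
        Finset.mem_coe]
      constructor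
      · rintro (⟨i, j, hij, hvi, hvj, hz⟩ | ⟨c, hc, h1, h0, hodd⟩)
        · left
          rcases lt_or_gt_of_ne hij with hlt | hlt
          · obtain ⟨b, b', rfl⟩ := eq_vecA v i j hij hvi hvj hz
            exact ⟨((i, j), (b, b')), (hmemA _).2 hlt, rfl⟩
          · obtain ⟨b, b', rfl⟩ := eq_vecA v j i hij.symm hvj hvi (fun k hk hk' => hz k hk' hk)
            exact ⟨((j, i), (b, b')), (hmemA _).2 hlt, rfl⟩
        · right
          obtain ⟨T, hTs, hTset, rfl⟩ := eq_vecB v c h1 h0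
          refine ⟨(c, T), (hmemB _).2 ⟨hc, hTs, ?_⟩, rfl⟩
          rwa [hTset, Set.ncard_coe_finset] at hodd
      · rintro (⟨q, hq, rfl⟩ | ⟨q, hq, rfl⟩)
        · left
          have hlt := (hmemA q).1 hq
          obtain ⟨h1, h2, h3⟩ := vecA_mem_iff q.1.1 q.1.2 (ne_of_lt hlt) q.2.1 q.2.2
          exact ⟨q.1.1, q.1.2, ne_of_lt hlt, h1, h2, h3⟩
        · right
          obtain ⟨hc, hTs, hodd⟩ := (hmemB q).1 hq
          refine ⟨q.1, hc, ?_, ?_, ?_⟩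
          · intro i hi
            by_cases hT : i ∈ q.2 <;> simp [hfB, vecB, hi, hT]
          · intro i hi
            simp [hfB, vecB, hi]
          · have hset2 : ({i : Fin n | fB q i = -1} : Set (Fin n)) = ↑q.2 := by
              ext i
              simp only [Set.mem_setOf_eq, Finset.mem_coe]
              exact vecB_neg_one_iff q.1 q.2 hTs i
            rw [hset2, Set.ncard_coe_finset]
            exact hodd
    rw [hseteq, Set.ncard_coe_finset]
    have hdisj : Disjoint (pA.image fA) (pB.image fB) := by
      rw [Finset.disjoint_left]
      rintro x hxA hxB
      obtain ⟨q, hq, rfl⟩ := Finset.mem_image.1 hxA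
      obtain ⟨q', hq', heq⟩ := Finset.mem_image.1 hxB
      have h2 : fA q q.1.1 = 2 ∨ fA q q.1.1 = -2 := by
        cases hb : q.2.1 <;> simp [hfA, vecA, hb]
      have h3 : ∀ i, fB q' i = 0 ∨ fB q' i = 1 ∨ fB q' i = -1 := by
        intro i
        by_cases hc0 : q'.1 i = 0
        · simp [hfB, vecB, hc0]
        · by_cases hT : i ∈ q'.2 <;> simp [hfB, vecB, hc0, hT]
      rw [heq] at h3
      rcases h2 with h | h <;> rcases h3 q.1.1 with g | g | g <;> rw [h] at g <;> norm_num at g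
    rw [Finset.card_union_of_disjoint hdisj]
    have hcA : #(Finset.image fA pA) = n.choose 2 * 4 := by
      rw [Finset.card_image_of_injOn]
      · rw [hpA, Finset.card_product, card_ltpairs]
        congr 1
      · intro q hq q' hq' heq
        have hlt := (hmemA q).1 hq
        have hlt' := (hmemA q').1 hq'
        obtain ⟨e1, e2, e3, e4⟩ := vecA_inj hlt hlt' heq
        exact Prod.ext_iff.2 ⟨Prod.ext_iff.2 ⟨e1, e2⟩, Prod.ext_iff.2 ⟨e3, e4⟩⟩
    have hcB : #(Finset.image fB pB) = 128 * C.card := by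
      rw [Finset.card_image_of_injOn]
      · rw [hpB, Finset.card_biUnion]
        · have hterm : ∀ c ∈ C,
              #(((supp c).powerset.filter fun t => Odd #t).image fun t => ((c, t) :
                (Fin n → ZMod 2) × Finset (Fin n))) = 128 := by
            intro c hc
            rw [Finset.card_image_of_injective _ (fun a b hab => by
              simpa using congrArg Prod.snd hab)]
            obtain ⟨a, ha⟩ : (supp c).Nonempty := by
              rw [← Finset.card_pos, hsupp8 c hc]; norm_num
            rw [card_odd_powerset (supp c) a ha, hsupp8 c hc]
            norm_num
          rw [Finset.sum_congr rfl hterm, Finset.sum_const, smul_eq_mul, mul_comm]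
        · intro c hc c' hc' hcc
          rw [Function.onFun, Finset.disjoint_left]
          rintro x hx hx'
          obtain ⟨t, _, rfl⟩ := Finset.mem_image.1 hx
          obtain ⟨t', _, heq⟩ := Finset.mem_image.1 hx'
          exact hcc (congrArg Prod.fst heq).symm
      · intro q hq q' hq' heq
        obtain ⟨-, hTs, -⟩ := (hmemB q).1 hq
        obtain ⟨-, hTs', -⟩ := (hmemB q').1 hq'
        obtain ⟨e1, e2⟩ := vecB_inj hTs hTs' heq
        exact Prod.ext_iff.2 ⟨e1, e2⟩
    rw [hcA, hcB]
    ring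
  exact ⟨hnormsq, hinner, hcard⟩
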